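/- Among all minimum-weight strong-neighbors Roman dominating functions, one for which the set V_1 = {u : f(u) = 1} has minimum cardinality satisfies that no two vertices of V_1 are strong neighbors. -/

import Mathlib

noncomputable section
open scoped Classical
open Finset

/-- A fuzzy graph on a vertex set `V`. -/
structure FuzzyGraph (V : Type*) where
  σ : V → ℝ
  μ : V → V → ℝ
  σ_nonneg : ∀ v, 0 ≤ σ v
  σ_le_one : ∀ v, σ v ≤ 1
  μ_nonneg : ∀ u v, 0 ≤ μ u v
  μ_symm : ∀ u v, μ u v = μ v u
  μ_le : ∀ u v, μ u v ≤ min (σ u) (σ v)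
  μ_irrefl : ∀ v, μ v v = 0

namespace FuzzyGraph

variable {V : Type*} (G : FuzzyGraph V)

/-- The strength of a walk (given as its list of vertices): the minimum
membership value of its edges (1 for walks without edges). -/
def walkStrength (l : List V) : ℝ :=
  ((l.zip l.tail).map fun p => G.μ p.1 p.2).foldr min 1

/-- `l` is a `u`–`v` walk: it starts at `u`, ends at `v`, and consecutive
vertices are joined by edges of positive membership. -/
def IsWalk (u v : V) (l : List V) : Prop :=
  l.head? = some u ∧ l.getLast? = some v ∧ l.Chain' (fun a b => 0 < G.μ a b)

/-- `CONN_G(u,v)`: the maximum strength over all `u`–`v` paths. -/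
def conn (u v : V) : ℝ :=
  sSup {s | ∃ l : List V, G.IsWalk u v l ∧ 2 ≤ l.length ∧ s = G.walkStrength l}

/-- The edge `(u,v)` is strong. -/
def StrongEdge (u v : V) : Prop :=
  0 < G.μ u v ∧ G.μ u v = G.conn u v

/-- `μ_s(u)`: the minimum membership value among strong edges at `u`
(`0` if `u` has no strong neighbor, via `Real.sInf_empty`). -/
def mus (u : V) : ℝ :=
  sInf {x | ∃ v, G.StrongEdge u v ∧ x = G.μ u v}

/-- The strong neighborhood degree `d_SN(v)`. -/
def dSN [Fintype V] (v : V) : ℝ :=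
  ∑ u ∈ Finset.univ.filter (fun u => G.StrongEdge v u), G.σ u

/-- `D` is a strong dominating set. -/
def IsStrongDomSet (D : Finset V) : Prop :=
  ∀ v, v ∉ D → ∃ u ∈ D, G.StrongEdge v u

/-- The weight of a strong dominating set. -/
def domWeight (D : Finset V) : ℝ := ∑ u ∈ D, G.mus u

/-- The strong domination number `γ_s(G)`. -/
def gammaS [Fintype V] : ℝ :=
  sInf {w | ∃ D : Finset V, G.IsStrongDomSet D ∧ w = G.domWeight D}

/-- `f` is a strong-neighbors Roman dominating function (SNRDF). -/
def IsSNRDF (f : V → ℕ) : Prop :=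
  (∀ v, f v ≤ 2) ∧ ∀ v, f v = 0 → ∃ u, G.StrongEdge v u ∧ f u = 2

/-- The weight of an SNRDF. -/
def snrdfWeight [Fintype V] (f : V → ℕ) : ℝ := ∑ v, (f v : ℝ) * G.mus v

/-- The strong-neighbors Roman domination number `γ_snR(G)`. -/
def gammaSnR [Fintype V] : ℝ :=
  sInf {w | ∃ f : V → ℕ, G.IsSNRDF f ∧ w = G.snrdfWeight f}

/-- The fuzzy subgraph induced by the vertices satisfying `p`. -/
def induce (p : V → Prop) : FuzzyGraph {v // p v} where
  σ v := G.σ v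
  μ u v := G.μ u v
  σ_nonneg v := G.σ_nonneg v
  σ_le_one v := G.σ_le_one v
  μ_nonneg u v := G.μ_nonneg u v
  μ_symm u v := G.μ_symm u v
  μ_le u v := G.μ_le u v
  μ_irrefl v := G.μ_irrefl v

/-- The minimum membership value among the strong edges of `G`. -/
def muMin : ℝ := sInf {x | ∃ u v, G.StrongEdge u v ∧ x = G.μ u v}

/-- The complement of a fuzzy graph. -/
def compl : FuzzyGraph V where
  σ := G.σ
  μ u v := if u = v then 0 else min (G.σ u) (G.σ v) - G.μ u v
  σ_nonneg := G.σ_nonneg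
  σ_le_one := G.σ_le_one
  μ_nonneg u v := by
    by_cases h : u = v
    · simp [h]
    · simp only [if_neg h, sub_nonneg]
      exact G.μ_le u v
  μ_symm u v := by
    by_cases h : u = v
    · simp [h]
    · have h' : ¬ v = u := fun hh => h hh.symm
      simp only [if_neg h, if_neg h', min_comm (G.σ u), G.μ_symm u v]
  μ_le u v := by
    by_cases h : u = v
    · subst h
      simp only [if_pos rfl, le_min_iff]
      exact ⟨G.σ_nonneg u, G.σ_nonneg u⟩
    · simp only [if_neg h]
      have := G.μ_nonneg u v
      linarith
  μ_irrefl v := by simp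

end FuzzyGraph

/-! ### Auxiliary lemmas -/

theorem aux_foldr_min_pull (t : List ℝ) (x b : ℝ) :
    t.foldr min (min x b) = min x (t.foldr min b) := by
  induction t generalizing b with
  | nil => rfl
  | cons y s ih => simp only [List.foldr_cons, ih, min_left_comm]

theorem aux_foldr_min_rev (l : List ℝ) (b : ℝ) : l.reverse.foldr min b = l.foldr min b := by
  rw [List.foldr_reverse]
  induction l generalizing b with
  | nil => rfl
  | cons x t ih =>
    simp only [List.foldl_cons, List.foldr_cons, ih]
    exact aux_foldr_min_pull t x b

theorem aux_zip_tail_append {V : Type*} (l : List V) (a : V) :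
    (l ++ [a]).zip ((l ++ [a]).tail) =
      l.zip l.tail ++ (l.getLast?.map fun b => (b, a)).toList := by
  induction l with
  | nil => simp
  | cons x t ih =>
    cases t with
    | nil => simp
    | cons y s =>
      simp only [List.cons_append, List.tail_cons, List.zip_cons_cons] at *
      rw [ih]
      simp [List.getLast?_cons_cons]

theorem aux_zip_tail_reverse {V : Type*} (l : List V) :
    l.reverse.zip l.reverse.tail = ((l.zip l.tail).map Prod.swap).reverse := by
  induction l with
  | nil => simp
  | cons x t ih =>
    rw [List.reverse_cons, aux_zip_tail_append, ih, List.getLast?_reverse]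
    cases t with
    | nil => simp
    | cons y s => simp [List.zip_cons_cons]

namespace FuzzyGraph

variable {V : Type*} (G : FuzzyGraph V)

theorem walkStrength_reverse (l : List V) :
    G.walkStrength l.reverse = G.walkStrength l := by
  unfold walkStrength
  rw [aux_zip_tail_reverse, List.map_reverse, aux_foldr_min_rev, List.map_map]
  congr 1
  apply List.map_congr_left
  intro p _
  exact G.μ_symm p.2 p.1

theorem IsWalk.reverse {u v : V} {l : List V} (h : G.IsWalk u v l) :
    G.IsWalk v u l.reverse := by
  obtain ⟨h1, h2, h3⟩ := h
  refine ⟨?_, ?_, ?_⟩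
  · rw [List.head?_reverse]; exact h2
  · rw [List.getLast?_reverse]; exact h1
  · show List.IsChain _ l.reverse; rw [List.isChain_reverse]
    exact h3.imp fun a b hab => by
      show 0 < G.μ b a
      rw [G.μ_symm b a]; exact hab

theorem conn_symm (u v : V) : G.conn u v = G.conn v u := by
  unfold conn
  congr 1
  ext s
  constructor
  · rintro ⟨l, hw, hlen, rfl⟩
    exact ⟨l.reverse, hw.reverse G, by simpa using hlen, (G.walkStrength_reverse l).symm⟩
  · rintro ⟨l, hw, hlen, rfl⟩
    exact ⟨l.reverse, hw.reverse G, by simpa using hlen, (G.walkStrength_reverse l).symm⟩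

theorem StrongEdge.symm {u v : V} (h : G.StrongEdge u v) : G.StrongEdge v u := by
  obtain ⟨h1, h2⟩ := h
  refine ⟨by rwa [G.μ_symm v u], ?_⟩
  rw [G.μ_symm v u, h2, G.conn_symm u v]

theorem mus_nonneg (u : V) : 0 ≤ G.mus u := by
  apply Real.sInf_nonneg
  rintro x ⟨v, _, rfl⟩
  exact G.μ_nonneg u v

theorem snrdfWeight_nonneg [Fintype V] (g : V → ℕ) : 0 ≤ G.snrdfWeight g :=
  Finset.sum_nonneg fun v _ => mul_nonneg (by positivity) (G.mus_nonneg v)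

theorem gammaSnR_le [Fintype V] (g : V → ℕ) (hg : G.IsSNRDF g) :
    G.gammaSnR ≤ G.snrdfWeight g := by
  apply csInf_le
  · exact ⟨0, by rintro w ⟨h, _, rfl⟩; exact G.snrdfWeight_nonneg h⟩
  · exact ⟨g, hg, rfl⟩

/-- The key step: if `f u = f v = 1`, `uv` is a strong edge and `μ_s v ≤ μ_s u`,
we get a contradiction by switching `u ↦ 0`, `v ↦ 2`. -/
theorem key_step [Fintype V] (f : V → ℕ) (hf : G.IsSNRDF f)
    (hmin : G.snrdfWeight f = G.gammaSnR)
    (hcard : ∀ g : V → ℕ, G.IsSNRDF g → G.snrdfWeight g = G.gammaSnR →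
      (Finset.univ.filter fun v => f v = 1).card ≤
        (Finset.univ.filter fun v => g v = 1).card)
    (u v : V) (hu : f u = 1) (hv : f v = 1) (hSE : G.StrongEdge u v)
    (hmus : G.mus v ≤ G.mus u) : False := by
  have hne : u ≠ v := by
    rintro rfl
    have h0 := hSE.1
    rw [G.μ_irrefl u] at h0
    exact lt_irrefl 0 h0
  set g : V → ℕ := fun w => if w = u then 0 else if w = v then 2 else f w with hg_def
  have hgu : g u = 0 := by simp [hg_def]
  have hgv : g v = 2 := by simp [hg_def, hne.symm]
  have hg : G.IsSNRDF g := by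
    constructor
    · intro w
      by_cases h1 : w = u
      · simp [hg_def, h1]
      by_cases h2 : w = v
      · simp [hg_def, h1, h2, Ne.symm hne]
      · simp only [hg_def, if_neg h1, if_neg h2]
        exact hf.1 w
    · intro w hw
      by_cases h1 : w = u
      · exact ⟨v, h1 ▸ hSE, hgv⟩
      by_cases h2 : w = v
      · rw [h2, hgv] at hw; exact absurd hw (by norm_num)
      · have hfw : f w = 0 := by simpa [hg_def, h1, h2] using hw
        obtain ⟨z, hz1, hz2⟩ := hf.2 w hfw
        refine ⟨z, hz1, ?_⟩
        have hzu : z ≠ u := fun h => by rw [h, hu] at hz2; norm_num at hz2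
        have hzv : z ≠ v := fun h => by rw [h, hv] at hz2; norm_num at hz2
        simp [hg_def, hzu, hzv, hz2]
  -- weight computation
  have hweight : G.snrdfWeight g = G.snrdfWeight f + (G.mus v - G.mus u) := by
    unfold snrdfWeight
    have hterm : ∀ w : V, (g w : ℝ) * G.mus w = (f w : ℝ) * G.mus w +
        ((if w = u then -G.mus u else 0) + (if w = v then G.mus v else 0)) := by
      intro w
      by_cases h1 : w = u
      · subst h1
        rw [hgu, hu]
        simp [hne]
      by_cases h2 : w = v
      · subst h2
        rw [hgv, hv]
        simp [h1]
        ring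
      · simp [hg_def, h1, h2]
    calc ∑ w, (g w : ℝ) * G.mus w
        = ∑ w, ((f w : ℝ) * G.mus w +
            ((if w = u then -G.mus u else 0) + (if w = v then G.mus v else 0))) :=
          Finset.sum_congr rfl fun w _ => hterm w
      _ = (∑ w, (f w : ℝ) * G.mus w) +
            ((∑ w, if w = u then -G.mus u else 0) + (∑ w, if w = v then G.mus v else 0)) := by
          rw [Finset.sum_add_distrib, Finset.sum_add_distrib]
      _ = (∑ w, (f w : ℝ) * G.mus w) + (G.mus v - G.mus u) := by
          rw [Finset.sum_ite_eq' Finset.univ u fun _ => -G.mus u,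
            Finset.sum_ite_eq' Finset.univ v fun _ => G.mus v]
          simp
          ring
  have hle : G.snrdfWeight g ≤ G.gammaSnR := by
    rw [hweight, hmin]
    linarith
  have hge : G.gammaSnR ≤ G.snrdfWeight g := G.gammaSnR_le g hg
  have heq : G.snrdfWeight g = G.gammaSnR := le_antisymm hle hge
  -- cardinality contradiction
  have hsub : (Finset.univ.filter fun w => g w = 1) ⊆
      ((Finset.univ.filter fun w => f w = 1).erase u).erase v := by
    intro w hw
    rw [Finset.mem_filter] at hw
    have h1 : w ≠ u := fun h => by rw [h, hgu] at hw; exact absurd hw.2 (by norm_num)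
    have h2 : w ≠ v := fun h => by rw [h, hgv] at hw; exact absurd hw.2 (by norm_num)
    have hfw : f w = 1 := by
      have := hw.2
      simpa [hg_def, h1, h2] using this
    rw [Finset.mem_erase, Finset.mem_erase, Finset.mem_filter]
    exact ⟨h2, h1, Finset.mem_univ w, hfw⟩
  have humem : u ∈ (Finset.univ.filter fun w => f w = 1) := by
    rw [Finset.mem_filter]; exact ⟨Finset.mem_univ u, hu⟩
  have hvmem : v ∈ (Finset.univ.filter fun w => f w = 1).erase u := by
    rw [Finset.mem_erase, Finset.mem_filter]
    exact ⟨hne.symm, Finset.mem_univ v, hv⟩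
  have hcard2 : (((Finset.univ.filter fun w => f w = 1).erase u).erase v).card =
      (Finset.univ.filter fun w => f w = 1).card - 2 := by
    rw [Finset.card_erase_of_mem hvmem, Finset.card_erase_of_mem humem]
    omega
  have hpos : 2 ≤ (Finset.univ.filter fun w => f w = 1).card := by
    have : ({u, v} : Finset V) ⊆ (Finset.univ.filter fun w => f w = 1) := by
      intro w hw
      rw [Finset.mem_insert, Finset.mem_singleton] at hw
      rw [Finset.mem_filter]
      rcases hw with rfl | rfl
      · exact ⟨Finset.mem_univ w, hu⟩
      · exact ⟨Finset.mem_univ w, hv⟩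
    calc 2 = ({u, v} : Finset V).card := (Finset.card_pair hne).symm
      _ ≤ _ := Finset.card_le_card this
  have := hcard g hg heq
  have hle2 := le_trans this (le_trans (Finset.card_le_card hsub) (le_of_eq hcard2))
  omega

end FuzzyGraph

/-- a minimum-weight SNRDF whose set `V₁ = {u : f u = 1}` has
minimum cardinality has no two strong neighbors in `V₁`. -/
theorem no_strong_neighbors_in_V1 {V : Type*} [Fintype V]
    (G : FuzzyGraph V) (f : V → ℕ) (hf : G.IsSNRDF f)
    (hmin : G.snrdfWeight f = G.gammaSnR)
    (hcard : ∀ g : V → ℕ, G.IsSNRDF g → G.snrdfWeight g = G.gammaSnR →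
      (Finset.univ.filter fun v => f v = 1).card ≤
        (Finset.univ.filter fun v => g v = 1).card) :
    ∀ u v : V, f u = 1 → f v = 1 → ¬ G.StrongEdge u v := by
  intro u v hu hv hSE
  rcases le_total (G.mus v) (G.mus u) with h | h
  · exact G.key_step f hf hmin hcard u v hu hv hSE h
  · exact G.key_step f hf hmin hcard v u hv hu (hSE.symm G) h
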